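/- Let n ≥ 1, let p, q be integers with 1 ≤ p ≤ q ≤ n, and let A be an n×n real matrix. Suppose x, y ∈ ℝⁿ and λ, μ ∈ ℝ satisfy (A ⊗_p x)_i = λ + x_i and (A ⊗_q y)_i = μ + y_i for all i ∈ {1,…,n}. Then λ ≤ μ. (In particular, the maxmin-ω eigenvalues satisfy λ_1 ≤ λ_2 ≤ ⋯ ≤ λ_n.) -/

import Mathlib

/-- The maxmin-`p` value of `s : Fin n → ℝ`: the `p`-th smallest element (1-indexed) of the
multiset `{s 0, …, s (n-1)}`, counted with multiplicity. -/
noncomputable def maxmin {n : ℕ} (p : ℕ) (s : Fin n → ℝ) : ℝ :=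
  (Multiset.sort (Multiset.map s (Finset.univ : Finset (Fin n)).val) (· ≤ ·)).getD (p - 1) 0

/-- The maxmin-`p` matrix-vector product: `(A ⊗_p x)_i = ⊕_p (j ↦ A i j + x j)`. -/
noncomputable def mmProd {n : ℕ} (p : ℕ) (A : Fin n → Fin n → ℝ) (x : Fin n → ℝ) :
    Fin n → ℝ :=
  fun i => maxmin p (fun j => A i j + x j)

lemma countP_take_drop {α : Type*} (p : α → Bool) (L : List α) (m : ℕ) :
    L.countP p = (L.take m).countP p + (L.drop m).countP p := by
  rw [← List.countP_append, List.take_append_drop]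

lemma sorted_countP_le_ge {L : List ℝ} (h : L.Pairwise (·≤·)) {k : ℕ} (hk : k < L.length) :
    k + 1 ≤ L.countP (fun a => decide (a ≤ L[k])) := by
  rw [countP_take_drop _ L (k+1)]
  have : (L.take (k+1)).countP (fun a => decide (a ≤ L[k])) = k + 1 := by
    rw [List.countP_eq_length.mpr, List.length_take, Nat.min_eq_left hk]
    intro a ha
    obtain ⟨i, hi, rfl⟩ := List.mem_iff_getElem.mp ha
    rw [List.getElem_take]
    simp only [decide_eq_true_eq]
    have hi2 : i < k + 1 := by have := hi; rw [List.length_take] at this; omega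
    have hi' : i < L.length := by omega
    exact h.rel_get_of_le (a := ⟨i, hi'⟩) (b := ⟨k, hk⟩) (by simpa using Nat.lt_succ_iff.mp hi2)
  omega

lemma sorted_countP_lt_le {M : List ℝ} (h : M.Pairwise (·≤·)) {k : ℕ} (hk : k < M.length)
    {v : ℝ} (hv : v < M[k]) :
    M.countP (fun a => decide (a ≤ v)) ≤ k := by
  rw [countP_take_drop _ M k]
  have h0 : (M.drop k).countP (fun a => decide (a ≤ v)) = 0 := by
    rw [List.countP_eq_zero]
    intro a ha
    obtain ⟨i, hi, rfl⟩ := List.mem_iff_getElem.mp ha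
    rw [List.getElem_drop]
    simp only [decide_eq_true_eq, not_le]
    have hki : k + i < M.length := by
      have := hi; rw [List.length_drop] at this; omega
    exact lt_of_lt_of_le hv (h.rel_get_of_le (a := ⟨k, hk⟩) (b := ⟨k+i, hki⟩) (by simp))
  have h1 : (M.take k).countP (fun a => decide (a ≤ v)) ≤ k :=
    le_trans List.countP_le_length (by rw [List.length_take]; omega)
  omega

lemma countP_sort_eq {n : ℕ} (s : Fin n → ℝ) (P : ℝ → Prop) [DecidablePred P] :
    (Multiset.sort (Multiset.map s (Finset.univ : Finset (Fin n)).val) (· ≤ ·)).countP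
      (fun a => decide (P a)) = (Finset.univ.filter (fun j => P (s j))).card := by
  classical
  have h1 : (Multiset.sort (Multiset.map s (Finset.univ : Finset (Fin n)).val) (· ≤ ·)).countP
      (fun a => decide (P a)) = Multiset.countP P (Multiset.map s Finset.univ.val) := by
    conv_rhs => rw [← Multiset.sort_eq (Multiset.map s Finset.univ.val) (· ≤ ·)]
    rw [Multiset.coe_countP]
  rw [h1, Multiset.countP_map]
  rfl

lemma key {n p q : ℕ} (hp1 : 1 ≤ p) (hpq : p ≤ q) (hqn : q ≤ n)
    (s t : Fin n → ℝ) (c : ℝ) (h : ∀ j, s j ≤ t j + c) :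
    maxmin p s ≤ maxmin q t + c := by
  classical
  set L := Multiset.sort (Multiset.map s (Finset.univ : Finset (Fin n)).val) (· ≤ ·) with hL
  set M := Multiset.sort (Multiset.map t (Finset.univ : Finset (Fin n)).val) (· ≤ ·) with hM
  have hLlen : L.length = n := by
    rw [hL, Multiset.length_sort, Multiset.card_map]; simp
  have hMlen : M.length = n := by
    rw [hM, Multiset.length_sort, Multiset.card_map]; simp
  have hpL : p - 1 < L.length := by omega
  have hqM : q - 1 < M.length := by omega
  rw [maxmin, maxmin, ← hL, ← hM, List.getD_eq_getElem _ _ hpL, List.getD_eq_getElem _ _ hqM]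
  by_contra hcon
  push_neg at hcon
  set v := M[q-1] with hv
  have hMs : M.Pairwise (·≤·) := by rw [hM]; exact Multiset.pairwise_sort _ _
  have hLs : L.Pairwise (·≤·) := by rw [hL]; exact Multiset.pairwise_sort _ _
  have hcM : q ≤ M.countP (fun a => decide (a ≤ v)) := by
    have := sorted_countP_le_ge hMs hqM
    rw [← hv] at this
    omega
  have hcL : L.countP (fun a => decide (a ≤ v + c)) ≤ p - 1 := by
    refine sorted_countP_lt_le hLs hpL ?_
    linarith
  rw [hL, countP_sort_eq s (fun a => a ≤ v + c)] at hcL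
  rw [hM, countP_sort_eq t (fun a => a ≤ v)] at hcM
  have hsub : (Finset.univ.filter (fun j => t j ≤ v)) ⊆
      (Finset.univ.filter (fun j => s j ≤ v + c)) := by
    intro j hj
    simp only [Finset.mem_filter, Finset.mem_univ, true_and] at hj ⊢
    have := h j
    linarith
  have := Finset.card_le_card hsub
  omega

/-- The maxmin eigenvalues are monotone in the threshold: `λ_p ≤ λ_q` when `p ≤ q`. -/
theorem maxmin_eigenvalues_monotone (n p q : ℕ) (hn : 1 ≤ n) (hp1 : 1 ≤ p) (hpq : p ≤ q)
    (hqn : q ≤ n) (A : Fin n → Fin n → ℝ) (x y : Fin n → ℝ) (lam mu : ℝ)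
    (hx : ∀ i, mmProd p A x i = lam + x i)
    (hy : ∀ i, mmProd q A y i = mu + y i) :
    lam ≤ mu := by
  obtain ⟨i, -, hi⟩ := Finset.exists_max_image Finset.univ (fun j => x j - y j)
    (Finset.univ_nonempty_iff.mpr (Fin.pos_iff_nonempty.mp hn))
  have hkey := key hp1 hpq hqn (fun j => A i j + x j) (fun j => A i j + y j) (x i - y i)
    (fun j => by
      have := hi j (Finset.mem_univ j)
      show A i j + x j ≤ A i j + y j + (x i - y i)
      linarith)
  have hx' := hx i
  have hy' := hy i
  simp only [mmProd] at hx' hy'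
  rw [hx', hy'] at hkey
  linarith
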